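/- Let 0 < m < M, let K, k be real numbers with K > k, K/M < k/m, and (K/M)·q ≤ (K-k)/(M-m) ≤ (k/m)·q for some q with 0 < q < 1. Then for all t ∈ [m, M], h(t) = t^{-q}(k + ((K-k)/(M-m))(t-m)) ≥ ((mK - Mk)/((q-1)(M-m))) · ((q-1)(K-k)/(q(mK - Mk)))^q. -/

import Mathlib

lemma furuta_key (a c q : ℝ) (ha : 0 < a) (hc : 0 < c) (hq0 : 0 < q) (hq1 : q < 1)
    (t : ℝ) (ht : 0 < t) :
    (q * a / ((1 - q) * c)) ^ (-q) * (a / (1 - q)) ≤ t ^ (-q) * (a + c * t) := by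
  have h1q : 0 < 1 - q := by linarith
  set t₁ : ℝ := q * a / ((1 - q) * c) with ht₁def
  have ht₁ : 0 < t₁ := by positivity
  set s : ℝ := t / t₁ with hsdef
  have hs : 0 < s := by positivity
  have hts : t = t₁ * s := by rw [hsdef, mul_div_assoc', mul_div_cancel_left₀ _ ht₁.ne']
  have amgm : s ^ q ≤ (1 - q) + q * s := by
    have := Real.geom_mean_le_arith_mean2_weighted (le_of_lt h1q) (le_of_lt hq0)
      (zero_le_one) (le_of_lt hs) (by ring)
    simpa using this
  have hsq : (0:ℝ) < s ^ q := Real.rpow_pos_of_pos hs q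
  have hct₁ : c * t₁ = q * a / (1 - q) := by
    rw [ht₁def]; field_simp
  have hsneg : s ^ (-q) = (s ^ q)⁻¹ := Real.rpow_neg hs.le q
  have hmul : t ^ (-q) = t₁ ^ (-q) * s ^ (-q) := by
    rw [hts, Real.mul_rpow ht₁.le hs.le]
  rw [hmul, hts]
  have ht₁q : 0 < t₁ ^ (-q) := Real.rpow_pos_of_pos ht₁ (-q)
  rw [mul_assoc]
  apply mul_le_mul_of_nonneg_left _ ht₁q.le
  -- goal: a / (1 - q) ≤ s ^ (-q) * (a + c * (t₁ * s))
  have : a + c * (t₁ * s) = a / (1 - q) * ((1 - q) + q * s) := by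
    rw [show c * (t₁ * s) = c * t₁ * s by ring, hct₁]; field_simp
  rw [this, hsneg]
  calc a / (1 - q) = 1 * (a / (1-q)) := (one_mul _).symm
    _ ≤ ((1 - q) + q * s) / s ^ q * (a / (1 - q)) := by
        apply mul_le_mul_of_nonneg_right _ (by positivity)
        rw [le_div_iff₀ hsq, one_mul]; exact amgm
    _ = (s ^ q)⁻¹ * (a / (1 - q) * ((1 - q) + q * s)) := by ring

theorem furuta_lemma_lower_bound (m M K k q : ℝ) (hm : 0 < m) (hmM : m < M)
    (hKk : K > k) (hKM : K / M < k / m) (hq0 : 0 < q) (hq1 : q < 1)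
    (h1 : (K / M) * q ≤ (K - k) / (M - m)) (h2 : (K - k) / (M - m) ≤ (k / m) * q)
    (t : ℝ) (ht : t ∈ Set.Icc m M) :
    (m * K - M * k) / ((q - 1) * (M - m)) *
        ((q - 1) * (K - k) / (q * (m * K - M * k))) ^ q ≤
      t ^ (-q) * (k + (K - k) / (M - m) * (t - m)) := by
  have hM : 0 < M := hm.trans hmM
  have hMm : 0 < M - m := by linarith
  have h1q : 0 < 1 - q := by linarith
  have hkm : m * K < M * k := by
    rw [div_lt_div_iff₀ hM hm] at hKM; linarith [hKM]
  set a : ℝ := (M * k - m * K) / (M - m) with hadef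
  set c : ℝ := (K - k) / (M - m) with hcdef
  have ha : 0 < a := by apply div_pos (by linarith) hMm
  have hc : 0 < c := by apply div_pos (by linarith) hMm
  have htpos : 0 < t := lt_of_lt_of_le hm ht.1
  have key := furuta_key a c q ha hc hq0 hq1 t htpos
  have e1 : k + (K - k) / (M - m) * (t - m) = a + c * t := by
    rw [hadef, hcdef]; field_simp; ring
  have hd1 : (q - 1) * (M - m) ≠ 0 := by
    apply mul_ne_zero (by linarith) (by linarith)
  have e2 : (m * K - M * k) / ((q - 1) * (M - m)) = a / (1 - q) := by
    rw [hadef, div_div, div_eq_div_iff hd1 (mul_ne_zero hMm.ne' (by linarith : (1:ℝ) - q ≠ 0))]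
    ring
  have e3 : (q - 1) * (K - k) / (q * (m * K - M * k)) = ((1 - q) * c) / (q * a) := by
    rw [hadef, hcdef]
    rw [div_eq_div_iff (by nlinarith) (by positivity)]
    field_simp; ring
  have hy : 0 < q * a / ((1 - q) * c) := by positivity
  have e4 : ((1 - q) * c / (q * a)) ^ q = (q * a / ((1 - q) * c)) ^ (-q) := by
    rw [show (1 - q) * c / (q * a) = (q * a / ((1 - q) * c))⁻¹ by rw [inv_div],
      Real.inv_rpow hy.le, ← Real.rpow_neg hy.le]
  rw [e1, e2, e3, e4]
  linarith [key]
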